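/- Let p/q be an even rational parameter with p ≥ 2, tune τ, κ = κ(p/q) ≥ 1, and core predecessor p̂/q̂ with tune τ̂. Then (2κ + 1)(ω − 2τ) + 2τ̂ = ω, where ω = p + q. -/

import Mathlib

/-- An *even rational parameter* is a fraction `p/q` with `p, q` coprime positive
integers, `p < q`, and `p*q` even. -/
def EvenParam (p q : ℕ) : Prop :=
  Nat.Coprime p q ∧ 0 < p ∧ p < q ∧ Even (p * q)

/-- `τ` is the *tune* of `p/q`: `0 < 2τ < p+q` and `2pτ ≡ ±1 (mod p+q)`. -/
def IsTune (p q τ : ℕ) : Prop :=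
  0 < 2 * τ ∧ 2 * τ < p + q ∧
    (((p : ℤ) + q) ∣ 2 * p * τ - 1 ∨ ((p : ℤ) + q) ∣ 2 * p * τ + 1)

/-- `p'/q'` is the *even predecessor* of `p/q`. -/
def IsEvenPred (p q p' q' : ℕ) : Prop :=
  Nat.Coprime p' q' ∧ p' < q' ∧ Even (p' * q') ∧
    ((p : ℤ) * q' - (q : ℤ) * p').natAbs = 1 ∧ p' + q' < p + q

/-- `κ` is the unique nonnegative integer with `κ/(2κ+1) ≤ τ/(p+q) < (κ+1)/(2κ+3)`. -/
def IsKappa (p q τ κ : ℕ) : Prop :=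
  κ * (p + q) ≤ (2 * κ + 1) * τ ∧ (2 * κ + 3) * τ < (κ + 1) * (p + q)

/-- If `a, b` are coprime and `a*b` is even then `a+b` is odd. -/
lemma aux_odd_add {a b : ℕ} (hc : Nat.Coprime a b) (he : Even (a * b)) :
    ¬ (2 ∣ a + b) := by
  intro hd
  have h1 : Nat.gcd a b = 1 := hc
  rcases Nat.even_mul.mp he with h2 | h2
  · have h2a : 2 ∣ a := h2.two_dvd
    have h2b : 2 ∣ b := (Nat.dvd_add_right h2a).mp hd
    have := Nat.dvd_gcd h2a h2b
    rw [h1] at this; omega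
  · have h2b : 2 ∣ b := h2.two_dvd
    have h2a : 2 ∣ a := (Nat.dvd_add_left h2b).mp hd
    have := Nat.dvd_gcd h2a h2b
    rw [h1] at this; omega

/-- (2κ+1)(ω - 2τ) + 2τ̂ = ω. -/
theorem corePred_main_identity (p q τ κ p' q' phat qhat tauhat : ℕ)
    (h : EvenParam p q) (hp2 : 2 ≤ p)
    (hτ : IsTune p q τ) (hκ : IsKappa p q τ κ) (hκ1 : 1 ≤ κ)
    (hpred : IsEvenPred p q p' q')
    (hphat : phat + 2 * κ * p' = p) (hqhat : qhat + 2 * κ * q' = q)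
    (htauhat : IsTune phat qhat tauhat) :
    (2 * (κ : ℤ) + 1) * (((p : ℤ) + q) - 2 * τ) + 2 * tauhat = (p : ℤ) + q := by
  obtain ⟨hcop, hp0, hpq, hev⟩ := h
  obtain ⟨hτ0, hτω, hτd⟩ := hτ
  obtain ⟨hκa, hκb⟩ := hκ
  obtain ⟨hcop', hpq', hev', hdet, hsum'⟩ := hpred
  obtain ⟨hτh0, hτhω, hτhd⟩ := htauhat
  -- parities
  have hodd : ¬ (2 ∣ p + q) := aux_odd_add hcop hev
  have hodd' : ¬ (2 ∣ p' + q') := aux_odd_add hcop' hev'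
  -- extract signs
  obtain ⟨ε, hε1, hεd⟩ : ∃ ε : ℤ, (ε = 1 ∨ ε = -1) ∧
      ((p : ℤ) + q) ∣ 2 * p * τ - ε := by
    rcases hτd with h1 | h1
    · exact ⟨1, Or.inl rfl, h1⟩
    · exact ⟨-1, Or.inr rfl, by simpa [sub_neg_eq_add] using h1⟩
  obtain ⟨δ, hδ1, hδ⟩ : ∃ δ : ℤ, (δ = 1 ∨ δ = -1) ∧
      (p : ℤ) * q' - (q : ℤ) * p' = δ := by
    rcases Int.natAbs_eq_iff.mp hdet with h1 | h1
    · exact ⟨1, Or.inl rfl, by exact_mod_cast h1⟩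
    · exact ⟨-1, Or.inr rfl, by exact_mod_cast h1⟩
  have hδδ : δ * δ = 1 := by rcases hδ1 with rfl | rfl <;> norm_num
  have hεε : ε * ε = 1 := by rcases hε1 with rfl | rfl <;> norm_num
  -- basic cast bounds
  have bτ1 : (0 : ℤ) < 2 * τ := by exact_mod_cast hτ0
  have bτ2 : 2 * (τ : ℤ) < (p : ℤ) + q := by exact_mod_cast hτω
  have bω'1 : (0 : ℤ) < (p' : ℤ) + q' := by
    have : 0 < q' := by omega
    have : (0:ℤ) < q' := by exact_mod_cast this
    have hp'0 : (0:ℤ) ≤ p' := by positivity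
    linarith
  have bω'2 : (p' : ℤ) + q' < (p : ℤ) + q := by exact_mod_cast hsum'
  have bω : (0 : ℤ) < (p : ℤ) + q := by
    have : 0 < p + q := by omega
    exact_mod_cast this
  -- p*(p'+q') ≡ δ (mod p+q)
  have hpw : (p : ℤ) * ((p' : ℤ) + q') - δ = ((p : ℤ) + q) * p' := by
    linear_combination hδ
  -- ω ∣ 2τ - εδ ω'
  have key : ((p : ℤ) + q) ∣ (p : ℤ) * (2 * τ * δ - ε * ((p' : ℤ) + q')) := by
    have h1 : ((p : ℤ) + q) ∣ δ * (2 * (p:ℤ) * τ - ε) := hεd.mul_left δ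
    have h2 : ((p : ℤ) + q) ∣ ε * (((p : ℤ) + q) * p') := ⟨ε * p', by ring⟩
    have h3 := dvd_sub h1 h2
    have e : δ * (2 * (p:ℤ) * τ - ε) - ε * (((p : ℤ) + q) * p')
        = (p : ℤ) * (2 * τ * δ - ε * ((p' : ℤ) + q')) := by
      linear_combination ε * hpw
    rwa [e] at h3
  have hcoQ : IsCoprime (p : ℤ) (q : ℤ) := Nat.isCoprime_iff_coprime.mpr hcop
  have hcoω : IsCoprime ((p : ℤ) + q) (p : ℤ) := by
    have := (hcoQ.add_mul_left_right 1).symm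
    simpa [mul_one, add_comm] using this
  have key2 : ((p : ℤ) + q) ∣ (2 * τ * δ - ε * ((p' : ℤ) + q')) :=
    hcoω.dvd_of_dvd_mul_left key
  have key4 : ((p : ℤ) + q) ∣ (2 * τ - (ε * δ) * ((p' : ℤ) + q')) := by
    have h1 := key2.mul_left δ
    have e : δ * (2 * (τ:ℤ) * δ - ε * ((p' : ℤ) + q'))
        = 2 * τ - (ε * δ) * ((p' : ℤ) + q') := by
      linear_combination (2 * (τ:ℤ)) * hδδ
    rwa [e] at h1
  have hs : ε * δ = 1 ∨ ε * δ = -1 := by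
    rcases hε1 with rfl | rfl <;> rcases hδ1 with rfl | rfl <;> norm_num
  -- key relation: 2τ + (p'+q') = p+q
  have h2τ : 2 * (τ : ℤ) + ((p' : ℤ) + q') = (p : ℤ) + q := by
    rcases hs with hs1 | hs1
    · exfalso
      rw [hs1, one_mul] at key4
      have h0 : 2 * (τ:ℤ) - ((p':ℤ) + q') = 0 :=
        Int.eq_zero_of_abs_lt_dvd key4 (by rw [abs_lt]; constructor <;> linarith)
      have : 2 * τ = p' + q' := by exact_mod_cast (by linarith : 2 * (τ:ℤ) = (p':ℤ) + q')
      exact hodd' ⟨τ, by omega⟩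
    · rw [hs1] at key4
      have key5 : ((p : ℤ) + q) ∣ (2 * τ + ((p' : ℤ) + q')) - ((p:ℤ) + q) := by
        have := dvd_sub key4 (dvd_refl ((p:ℤ) + q))
        obtain ⟨c, hc⟩ := this; exact ⟨c, by linarith⟩
      have h0 := Int.eq_zero_of_abs_lt_dvd key5
        (by rw [abs_lt]; constructor <;> linarith)
      linarith
  -- strict kappa inequality
  have hκa' : (κ : ℤ) * ((p:ℤ) + q) ≤ (2 * κ + 1) * τ := by exact_mod_cast hκa
  have hstrict : (κ : ℤ) * ((p:ℤ) + q) < (2 * (κ:ℤ) + 1) * τ := by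
    rcases lt_or_eq_of_le hκa' with h1 | heq
    · exact h1
    · exfalso
      -- equality case: derive (2κ+1)ω' = ω and ω ∣ 2κ+1
      have e1 : (2 * (κ:ℤ) + 1) * ((p':ℤ) + q') = (p:ℤ) + q := by
        linear_combination 2 * heq + (2 * (κ:ℤ) + 1) * h2τ
      obtain ⟨c, hc⟩ := hεd
      have hdvdε : ((p:ℤ) + q) ∣ (2 * (κ:ℤ) + 1) * ε :=
        ⟨2 * p * κ - (2 * κ + 1) * c, by linear_combination (-2 * (p:ℤ)) * heq - (2 * (κ:ℤ) + 1) * hc⟩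
      have hdvdκ : ((p:ℤ) + q) ∣ (2 * (κ:ℤ) + 1) := by
        have h1 := hdvdε.mul_right ε
        have e : (2 * (κ:ℤ) + 1) * ε * ε = 2 * (κ:ℤ) + 1 := by
          linear_combination (2 * (κ:ℤ) + 1) * hεε
        rwa [e] at h1
      have hκpos : (0:ℤ) < 2 * (κ:ℤ) + 1 := by positivity
      have hle : (p:ℤ) + q ≤ 2 * (κ:ℤ) + 1 := Int.le_of_dvd hκpos hdvdκ
      have hωle : (2 * (κ:ℤ) + 1) * ((p':ℤ) + q') ≤ (2 * (κ:ℤ) + 1) * 1 := by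
        linarith [e1, hle]
      have hω'le := le_of_mul_le_mul_left hωle hκpos
      have hω'1 : (p':ℤ) + q' = 1 := le_antisymm hω'le (by linarith)
      have : p' + q' = 1 := by exact_mod_cast hω'1
      have hp'0 : p' = 0 := by omega
      have hq'1 : q' = 1 := by omega
      subst hp'0; subst hq'1
      push_cast at hδ
      rcases hδ1 with rfl | rfl <;> omega
  -- κ * ω' < τ
  have hκω' : (κ : ℤ) * ((p' : ℤ) + q') < (τ : ℤ) := by
    have e : (κ:ℤ) * ((p:ℤ) + q) - 2 * κ * τ = κ * ((p':ℤ) + q') := by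
      linear_combination (-(κ:ℤ)) * h2τ
    linarith [hstrict, e]
  -- hat quantities
  have hP : (phat : ℤ) = (p:ℤ) - 2 * κ * p' := by
    have := congrArg (Nat.cast : ℕ → ℤ) hphat; push_cast at this; linarith
  have hQ : (qhat : ℤ) = (q:ℤ) - 2 * κ * q' := by
    have := congrArg (Nat.cast : ℕ → ℤ) hqhat; push_cast at this; linarith
  have hωhat : (phat : ℤ) + qhat = ((p:ℤ) + q) - 2 * κ * ((p':ℤ) + q') := by
    rw [hP, hQ]; ring
  have hdet2 : (phat : ℤ) * q' - (qhat : ℤ) * p' = δ := by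
    rw [hP, hQ]; linear_combination hδ
  -- bounds for τ* := τ - κω'
  have hτs2 : 2 * ((τ:ℤ) - κ * ((p':ℤ) + q')) = ((phat:ℤ) + qhat) - ((p':ℤ) + q') := by
    rw [hωhat]; linarith
  have hτs1 : (0:ℤ) < (τ:ℤ) - κ * ((p':ℤ) + q') := by linarith
  have hτsU : 2 * ((τ:ℤ) - κ * ((p':ℤ) + q')) < (phat:ℤ) + qhat := by linarith
  -- divisibility for τ*
  have hdτs : ((phat:ℤ) + qhat) ∣ 2 * phat * ((τ:ℤ) - κ * ((p':ℤ) + q')) + δ := by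
    refine ⟨(phat:ℤ) - p', ?_⟩
    linear_combination (phat:ℤ) * h2τ - (phat:ℤ) * hωhat - hdet2
  -- coprimality facts for the hat fraction
  have hcop2 : IsCoprime ((phat:ℤ) + qhat) (phat : ℤ) :=
    ⟨-(δ * p'), δ * q' + δ * p', by linear_combination δ * hdet2 + hδδ⟩
  have hoddhat : ¬ (2 ∣ phat + qhat) := by
    intro hd
    obtain ⟨m, hm⟩ : ∃ m, p + q = phat + qhat + 2 * m :=
      ⟨κ * p' + κ * q', by rw [← hphat, ← hqhat]; ring⟩
    exact hodd (by omega)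
  have hcop3 : IsCoprime ((phat:ℤ) + qhat) (2 : ℤ) := by
    obtain ⟨k, hk⟩ : ∃ k, phat + qhat = 2 * k + 1 := by
      rcases Nat.even_or_odd (phat + qhat) with h1 | h1
      · exact absurd h1.two_dvd hoddhat
      · exact h1
    have hk' : (phat:ℤ) + qhat = 2 * k + 1 := by exact_mod_cast hk
    exact ⟨1, -(k:ℤ), by linarith⟩
  have hcop4 : IsCoprime ((phat:ℤ) + qhat) (2 * phat : ℤ) := hcop3.mul_right hcop2
  -- tune conditions for τ̂
  obtain ⟨ε₁, hε₁1, hd1⟩ : ∃ ε₁ : ℤ, (ε₁ = 1 ∨ ε₁ = -1) ∧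
      ((phat : ℤ) + qhat) ∣ 2 * phat * tauhat - ε₁ := by
    rcases hτhd with h1 | h1
    · exact ⟨1, Or.inl rfl, h1⟩
    · exact ⟨-1, Or.inr rfl, by simpa [sub_neg_eq_add] using h1⟩
  have bτh1 : (0:ℤ) < 2 * tauhat := by exact_mod_cast hτh0
  have bτh2 : 2 * (tauhat:ℤ) < (phat:ℤ) + qhat := by exact_mod_cast hτhω
  -- combine the two congruences
  have hX : ((phat:ℤ) + qhat) ∣ (2 * phat) *
      ((-δ) * tauhat - ε₁ * ((τ:ℤ) - κ * ((p':ℤ) + q'))) := by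
    have h1 := hd1.mul_left (-δ)
    have h2 := hdτs.mul_left ε₁
    have h3 := dvd_sub h1 h2
    have e : (-δ) * (2 * (phat:ℤ) * tauhat - ε₁) -
        ε₁ * (2 * phat * ((τ:ℤ) - κ * ((p':ℤ) + q')) + δ)
        = (2 * phat) * ((-δ) * tauhat - ε₁ * ((τ:ℤ) - κ * ((p':ℤ) + q'))) := by ring
    rwa [e] at h3
  have hX2 : ((phat:ℤ) + qhat) ∣ ((tauhat:ℤ) + (δ * ε₁) * ((τ:ℤ) - κ * ((p':ℤ) + q'))) := by
    have h1 := (hcop4.dvd_of_dvd_mul_left hX).mul_left (-δ)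
    have e : (-δ) * ((-δ) * (tauhat:ℤ) - ε₁ * ((τ:ℤ) - κ * ((p':ℤ) + q')))
        = (tauhat:ℤ) + (δ * ε₁) * ((τ:ℤ) - κ * ((p':ℤ) + q')) := by
      linear_combination (tauhat:ℤ) * hδδ
    rwa [e] at h1
  have hs2 : δ * ε₁ = 1 ∨ δ * ε₁ = -1 := by
    rcases hδ1 with rfl | rfl <;> rcases hε₁1 with rfl | rfl <;> norm_num
  have hfin : (tauhat : ℤ) = (τ:ℤ) - κ * ((p':ℤ) + q') := by
    rcases hs2 with hs1 | hs1
    · exfalso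
      rw [hs1, one_mul] at hX2
      have h0 := Int.eq_zero_of_abs_lt_dvd hX2
        (by rw [abs_lt]; constructor <;> linarith)
      linarith
    · rw [hs1] at hX2
      have e : (tauhat:ℤ) + (-1) * ((τ:ℤ) - κ * ((p':ℤ) + q'))
          = (tauhat:ℤ) - ((τ:ℤ) - κ * ((p':ℤ) + q')) := by ring
      rw [e] at hX2
      have h0 := Int.eq_zero_of_abs_lt_dvd hX2
        (by rw [abs_lt]; constructor <;> linarith)
      linarith
  -- conclude
  linear_combination 2 * hfin - 2 * (κ:ℤ) * h2τ
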